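/- Let 𝔾 = (G, ε, δ) be a comonad on a category C, X an object, and f : 𝔾X → 𝔾X a semi-simplicial map of the augmented simplicial object 𝔾X commuting with the identity on X (i.e., ε_X ∘ f₀ = ε_X, and f commutes with all face maps). Then f is simplicially homotopic to the identity on 𝔾X: the morphisms hⁿᵢ = G^{i+1}(f_{n−i}) ∘ σᵢ : G^{n+1}X → G^{n+2}X, for n ≥ 0 and 0 ≤ i ≤ n, constitute a simplicial homotopy from f to the identity. -/

import Mathlib

open CategoryTheory

namespace Statement13

variable {C : Type*} [Category C]

/-- Iterated application of the comonad functor: `iterObj G X n = GⁿX`. -/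
def iterObj (G : Comonad C) (X : C) : ℕ → C
  | 0 => X
  | n + 1 => G.obj (iterObj G X n)

/-- Face operators of the comonad resolution `𝔾X`:
`face G X n i : Gⁿ⁺¹X ⟶ GⁿX` is `∂ᵢ = Gⁱ ε_{Gⁿ⁻ⁱX}` (meaningful for `i ≤ n`);
`face G X 0 0 = ε_X` is the augmentation. -/
def face (G : Comonad C) (X : C) : (n i : ℕ) → (iterObj G X (n + 1) ⟶ iterObj G X n)
  | n, 0 => G.ε.app (iterObj G X n)
  | 0, _ + 1 => G.ε.app X
  | n + 1, i + 1 => G.toFunctor.map (face G X n i)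

/-- Degeneracy operators of the comonad resolution `𝔾X`:
`degen G X n i : Gⁿ⁺¹X ⟶ Gⁿ⁺²X` is `σᵢ = Gⁱ δ_{Gⁿ⁻ⁱX}` (meaningful for `i ≤ n`). -/
def degen (G : Comonad C) (X : C) : (n i : ℕ) → (iterObj G X (n + 1) ⟶ iterObj G X (n + 2))
  | n, 0 => G.δ.app (iterObj G X n)
  | 0, _ + 1 => G.δ.app X
  | n + 1, i + 1 => G.toFunctor.map (degen G X n i)

/-- Given a family `f` with `fₙ : Gⁿ⁺¹X ⟶ Gⁿ⁺¹X`, the morphisms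
`hⁿᵢ = Gⁱ⁺¹(f_{n−i}) ∘ σᵢ : Gⁿ⁺¹X ⟶ Gⁿ⁺²X` (for `0 ≤ i ≤ n`), defined here recursively
via `hⁿ₀ = G(fₙ) ∘ σ₀` and `hⁿ⁺¹ᵢ₊₁ = G(hⁿᵢ)`. -/
def htpy (G : Comonad C) (X : C) (f : ∀ n : ℕ, iterObj G X (n + 1) ⟶ iterObj G X (n + 1)) :
    (n i : ℕ) → (iterObj G X (n + 1) ⟶ iterObj G X (n + 2))
  | n, 0 => degen G X n 0 ≫ G.toFunctor.map (f n)
  | 0, _ + 1 => degen G X 0 0 ≫ G.toFunctor.map (f 0)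
  | n + 1, i + 1 => G.toFunctor.map (htpy G X f n i)

section Aux

variable (G : Comonad C) (X : C) (f : ∀ n : ℕ, iterObj G X (n + 1) ⟶ iterObj G X (n + 1))

lemma htpy_zero (n : ℕ) :
    htpy G X f n 0 = G.δ.app (iterObj G X n) ≫ G.toFunctor.map (f n) := by
  simp only [htpy, degen]; rfl

lemma htpy_succ (n i : ℕ) :
    htpy G X f (n + 1) (i + 1) = G.toFunctor.map (htpy G X f n i) := by
  simp only [htpy]; rfl

lemma face_zero (n : ℕ) :
    face G X n 0 = G.ε.app (iterObj G X n) := by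
  simp only [face]; rfl

lemma face_succ (n i : ℕ) :
    face G X (n + 1) (i + 1) = G.toFunctor.map (face G X n i) := by
  simp only [face]; rfl

lemma part1 (n : ℕ) : htpy G X f n 0 ≫ face G X (n + 1) 0 = f n := by
  erw [htpy_zero, face_zero, Category.assoc, G.ε.naturality (f n),
    show G.ε.app (iterObj G X (n + 1)) = G.ε.app (G.toFunctor.obj (iterObj G X n)) from rfl,
    Comonad.left_counit_assoc, Functor.id_map]

lemma part2 (haug : f 0 ≫ face G X 0 0 = face G X 0 0) :
    ∀ n, htpy G X f n n ≫ face G X (n + 1) (n + 1) = 𝟙 (iterObj G X (n + 1)) := by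
  intro n
  induction n with
  | zero =>
    erw [htpy_zero, face_succ, Category.assoc, ← G.toFunctor.map_comp, haug, face_zero]
    exact G.right_counit X
  | succ n ih =>
    erw [htpy_succ, face_succ, ← G.toFunctor.map_comp, ih, G.toFunctor.map_id]
    rfl

lemma part3 : ∀ n i j, i < j + 1 → j + 1 ≤ n + 1 →
    htpy G X f (n + 1) (j + 1) ≫ face G X (n + 2) i
      = face G X (n + 1) i ≫ htpy G X f n j := by
  intro n
  induction n with
  | zero =>
    intro i j h1 h2
    obtain rfl : j = 0 := by omega
    obtain rfl : i = 0 := by omega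
    rw [htpy_succ, face_zero, face_zero]
    exact G.ε.naturality _
  | succ m ih =>
    intro i j h1 h2
    match i with
    | 0 =>
      rw [htpy_succ, face_zero, face_zero]
      exact G.ε.naturality _
    | i' + 1 =>
      obtain ⟨j', rfl⟩ : ∃ j', j = j' + 1 := ⟨j - 1, by omega⟩
      erw [htpy_succ, face_succ, ← G.toFunctor.map_comp, ih i' j' (by omega) (by omega),
        face_succ, htpy_succ, G.toFunctor.map_comp]
      rfl

lemma part4
    (hface : ∀ n i, i ≤ n + 1 →
      f (n + 1) ≫ face G X (n + 1) i = face G X (n + 1) i ≫ f n) :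
    ∀ n i, 1 ≤ i → i ≤ n →
      htpy G X f n i ≫ face G X (n + 1) i = htpy G X f n (i - 1) ≫ face G X (n + 1) i := by
  intro n
  induction n with
  | zero => intro i h1 h2; omega
  | succ m ih =>
    intro i h1 h2
    match i with
    | 1 =>
      erw [show (1 : ℕ) - 1 = 0 from rfl, htpy_succ, face_succ, ← G.toFunctor.map_comp,
        part1 G X f m, htpy_zero, Category.assoc, ← G.toFunctor.map_comp,
        hface m 0 (by omega), G.toFunctor.map_comp, face_zero,
        show G.ε.app (iterObj G X (m + 1)) = G.ε.app (iterObj G X (m + 1)) from rfl]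
      exact (Comonad.right_counit_assoc G (iterObj G X (m + 1)) _).symm ▸ rfl
    | i' + 2 =>
      erw [show i' + 2 - 1 = i' + 1 by omega, htpy_succ, face_succ, ← G.toFunctor.map_comp,
        ih (i' + 1) (by omega) (by omega), show i' + 1 - 1 = i' by omega,
        htpy_succ, G.toFunctor.map_comp]
      rfl

lemma part5zero
    (hface : ∀ n i, i ≤ n + 1 →
      f (n + 1) ≫ face G X (n + 1) i = face G X (n + 1) i ≫ f n)
    (n k : ℕ) (hk : k ≤ n) :
    htpy G X f (n + 1) 0 ≫ face G X (n + 2) (k + 2)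
      = face G X (n + 1) (k + 1) ≫ htpy G X f n 0 := by
  erw [htpy_zero, face_succ, Category.assoc, ← G.toFunctor.map_comp,
    hface n (k + 1) (by omega), face_succ, G.toFunctor.map_comp, htpy_zero,
    ← Category.assoc, ← Category.assoc]
  congr 1
  have := G.δ.naturality (face G X n k)
  simp only [Functor.comp_map] at this
  exact this.symm

lemma part5
    (hface : ∀ n i, i ≤ n + 1 →
      f (n + 1) ≫ face G X (n + 1) i = face G X (n + 1) i ≫ f n) :
    ∀ n k j, j + 1 < k + 2 → k + 2 ≤ n + 2 → j ≤ n + 1 →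
      htpy G X f (n + 1) j ≫ face G X (n + 2) (k + 2)
        = face G X (n + 1) (k + 1) ≫ htpy G X f n j := by
  intro n
  induction n with
  | zero =>
    intro k j h1 h2 h3
    obtain rfl : j = 0 := by omega
    exact part5zero G X f hface 0 k (by omega)
  | succ m ih =>
    intro k j h1 h2 h3
    match j with
    | 0 => exact part5zero G X f hface (m + 1) k (by omega)
    | j' + 1 =>
      obtain ⟨t, rfl⟩ : ∃ t, k = t + 1 := ⟨k - 1, by omega⟩
      erw [htpy_succ, face_succ, ← G.toFunctor.map_comp,
        ih t j' (by omega) (by omega) (by omega)]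
      simp only [face_succ, htpy_succ, G.toFunctor.map_comp]
      exact G.toFunctor.map_comp _ _

end Aux

/-- Let `f : 𝔾X ⟶ 𝔾X` be a semi-simplicial map of the comonad
resolution commuting with the identity on `X`.  Then the morphisms
`hⁿᵢ = Gⁱ⁺¹(f_{n−i}) ∘ σᵢ` constitute a simplicial homotopy from `f` to the identity. -/
theorem statement13 (G : Comonad C) (X : C)
    (f : ∀ n : ℕ, iterObj G X (n + 1) ⟶ iterObj G X (n + 1))
    (haug : f 0 ≫ face G X 0 0 = face G X 0 0)
    (hface : ∀ n i, i ≤ n + 1 →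
      f (n + 1) ≫ face G X (n + 1) i = face G X (n + 1) i ≫ f n) :
    (∀ n, htpy G X f n 0 ≫ face G X (n + 1) 0 = f n) ∧
    (∀ n, htpy G X f n n ≫ face G X (n + 1) (n + 1) = 𝟙 (iterObj G X (n + 1))) ∧
    (∀ n i j, i < j → j ≤ n + 1 →
      htpy G X f (n + 1) j ≫ face G X (n + 2) i = face G X (n + 1) i ≫ htpy G X f n (j - 1)) ∧
    (∀ n i, 1 ≤ i → i ≤ n →
      htpy G X f n i ≫ face G X (n + 1) i = htpy G X f n (i - 1) ≫ face G X (n + 1) i) ∧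
    (∀ n i j, j + 1 < i → i ≤ n + 2 → j ≤ n + 1 →
      htpy G X f (n + 1) j ≫ face G X (n + 2) i = face G X (n + 1) (i - 1) ≫ htpy G X f n j) := by
  refine ⟨part1 G X f, part2 G X f haug, ?_, part4 G X f hface, ?_⟩
  · intro n i j h1 h2
    obtain ⟨j', rfl⟩ : ∃ j', j = j' + 1 := ⟨j - 1, by omega⟩
    simpa using part3 G X f n i j' (by omega) (by omega)
  · intro n i j h1 h2 h3
    obtain ⟨k, rfl⟩ : ∃ k, i = k + 2 := ⟨i - 2, by omega⟩
    have hk : k + 2 - 1 = k + 1 := by omega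
    rw [hk]
    exact part5 G X f hface n k j (by omega) (by omega) (by omega)

end Statement13
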